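/- Let D, d, μ, ν > 0. For ζ > 0 and ε ∈ (0,1), the algebraic system D a² = μ d b(1+ε)/(d b(1+ε) + ν(1−ε)), a² + b² = ζ/d, γ = μ/(d b(1+ε) + ν(1−ε)) admits exactly one positive solution, denoted (a_*^{ζ,ε}, b_*^{ζ,ε}, γ_*^{ζ,ε}). Moreover, for any m > 0, as (ζ, ε) → (m, 0) one has (a_*^{ζ,ε}, b_*^{ζ,ε}, γ_*^{ζ,ε}) → (a_*, b_*, γ_*), where (a_*, b_*, γ_*) is the unique positive solution of D a² = μ d b/(d b + ν), a² + b² = m/d, γ = μ/(d b + ν). -/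

import Mathlib

set_option maxHeartbeats 1000000

private theorem part1
    (D d μ ν : ℝ)
    (hD : 0 < D) (hd : 0 < d) (hμ : 0 < μ) (hν : 0 < ν)
    (ζ : ℝ) (hζ : 0 < ζ) (ε : ℝ) (hε0 : 0 < ε) (hε1 : ε < 1) :
      ∃! p : ℝ × ℝ × ℝ,
        (0 < p.1 ∧ 0 < p.2.1 ∧ 0 < p.2.2) ∧
        D * p.1 ^ 2
          = μ * d * p.2.1 * (1 + ε) / (d * p.2.1 * (1 + ε) + ν * (1 - ε)) ∧
        p.1 ^ 2 + p.2.1 ^ 2 = ζ / d ∧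
        p.2.2 = μ / (d * p.2.1 * (1 + ε) + ν * (1 - ε)) := by
  have hα : (0:ℝ) < 1 + ε := by linarith
  have hβ : (0:ℝ) < 1 - ε := by linarith
  have hq : 0 < ζ / d := div_pos hζ hd
  set r := Real.sqrt (ζ / d) with hrdef
  have hr0 : 0 < r := Real.sqrt_pos.mpr hq
  have hr2 : r ^ 2 = ζ / d := Real.sq_sqrt hq.le
  set h : ℝ → ℝ := fun b => D * (ζ/d - b^2) * (d*b*(1+ε) + ν*(1-ε)) - μ*d*b*(1+ε)
    with hhdef
  have hcont : ContinuousOn h (Set.Icc 0 r) := by fun_prop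
  have h0pos : 0 < h 0 := by
    simp only [hhdef]
    have : D * (ζ/d - 0^2) * (d*0*(1+ε) + ν*(1-ε)) - μ*d*0*(1+ε)
        = D * (ζ/d) * (ν*(1-ε)) := by ring
    rw [this]
    positivity
  have hrneg : h r < 0 := by
    simp only [hhdef]
    rw [hr2]
    have : D * (ζ/d - ζ/d) * (d*r*(1+ε) + ν*(1-ε)) - μ*d*r*(1+ε)
        = -(μ*d*r*(1+ε)) := by ring
    rw [this]
    have : 0 < μ*d*r*(1+ε) := by positivity
    linarith
  obtain ⟨b, hbmem, hb0⟩ :=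
    intermediate_value_Icc' hr0.le hcont ⟨hrneg.le, h0pos.le⟩
  have hbpos : 0 < b := by
    rcases lt_or_eq_of_le hbmem.1 with h | h
    · exact h
    · exfalso; rw [← h] at hb0; rw [hb0] at h0pos; exact lt_irrefl 0 h0pos
  have hΔpos : 0 < d*b*(1+ε) + ν*(1-ε) := by positivity
  have hΔne : d*b*(1+ε) + ν*(1-ε) ≠ 0 := ne_of_gt hΔpos
  have hkey : D * (ζ/d - b^2) * (d*b*(1+ε) + ν*(1-ε)) = μ*d*b*(1+ε) := by
    have := hb0
    simp only [hhdef] at this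
    linarith
  have hsq : 0 < ζ/d - b^2 := by
    have h1 : 0 < μ*d*b*(1+ε) := by positivity
    nlinarith [mul_pos hD hΔpos, hkey, h1]
  set a := Real.sqrt (ζ/d - b^2) with hadef
  have hapos : 0 < a := Real.sqrt_pos.mpr hsq
  have ha2 : a ^ 2 = ζ/d - b^2 := Real.sq_sqrt hsq.le
  refine ⟨(a, b, μ / (d*b*(1+ε) + ν*(1-ε))), ⟨⟨hapos, hbpos, by positivity⟩, ?_, ?_, rfl⟩, ?_⟩
  · show D * a ^ 2 = μ * d * b * (1 + ε) / (d * b * (1 + ε) + ν * (1 - ε))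
    rw [ha2, eq_div_iff hΔne]
    linarith [hkey]
  · show a ^ 2 + b ^ 2 = ζ / d
    rw [ha2]; ring
  · rintro ⟨a', b', γ'⟩ ⟨⟨ha', hb', hγ'⟩, e1, e2, e3⟩
    simp only at ha' hb' hγ' e1 e2 e3
    have hΔ'pos : 0 < d*b'*(1+ε) + ν*(1-ε) := by positivity
    have hkey' : D * (ζ/d - b'^2) * (d*b'*(1+ε) + ν*(1-ε)) = μ*d*b'*(1+ε) := by
      have ha'2 : a'^2 = ζ/d - b'^2 := by linarith
      rw [← ha'2]
      rw [eq_div_iff (ne_of_gt hΔ'pos)] at e1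
      linarith
    have hfac : (b' - b) * (D*(b'+b)*((d*b'*(1+ε) + ν*(1-ε))*(d*b*(1+ε) + ν*(1-ε)))
        + μ*d*(1+ε)*ν*(1-ε)) = 0 := by
      linear_combination (d*b'*(1+ε) + ν*(1-ε)) * hkey - (d*b*(1+ε) + ν*(1-ε)) * hkey'
    have hsum : (0:ℝ) < b' + b := by linarith
    have hfacpos : 0 < D*(b'+b)*((d*b'*(1+ε) + ν*(1-ε))*(d*b*(1+ε) + ν*(1-ε)))
        + μ*d*(1+ε)*ν*(1-ε) :=
      add_pos (mul_pos (mul_pos hD hsum) (mul_pos hΔ'pos hΔpos))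
        (by positivity : (0:ℝ) < μ*d*(1+ε)*ν*(1-ε))
    have hbb : b' = b := by
      rcases mul_eq_zero.mp hfac with h | h
      · linarith
      · exfalso; rw [h] at hfacpos; exact lt_irrefl 0 hfacpos
    have haa : a' = a := by
      have h2 : a'^2 = a^2 := by rw [ha2]; rw [hbb] at e2; linarith
      calc a' = Real.sqrt (a'^2) := (Real.sqrt_sq ha'.le).symm
        _ = Real.sqrt (a^2) := by rw [h2]
        _ = a := Real.sqrt_sq hapos.le
    have hγγ : γ' = μ / (d*b*(1+ε) + ν*(1-ε)) := by rw [e3, hbb]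
    simp [haa, hbb, hγγ, Prod.ext_iff]

private lemma aux_le (x c p q : ℝ) (hq : 0 < q) (hpq : q ≤ p) (hc : 0 ≤ c)
    (h : x * p ≤ c * q) : x ≤ c := by
  rcases le_or_gt x 0 with hx | hx
  · linarith
  · have h1 : x * q ≤ x * p := mul_le_mul_of_nonneg_left hpq hx.le
    have h2 : x * q ≤ c * q := le_trans h1 h
    exact le_of_mul_le_mul_right h2 hq

private theorem part2
    (D d μ ν : ℝ)
    (hD : 0 < D) (hd : 0 < d) (hμ : 0 < μ) (hν : 0 < ν)
    (m : ℝ) (hm : 0 < m) (A P G : ℝ)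
    (hA : 0 < A) (hP : 0 < P) (hG : 0 < G)
    (es1 : D * A ^ 2 = μ * d * P / (d * P + ν))
    (es2 : A ^ 2 + P ^ 2 = m / d)
    (es3 : G = μ / (d * P + ν))
    (η : ℝ) (hη : 0 < η) :
    ∃ δ > (0:ℝ), ∀ ζ ε : ℝ,
        0 < ζ → |ζ - m| < δ → 0 < ε → ε < δ → ε < 1 →
        ∀ a b g : ℝ,
          (0 < a ∧ 0 < b ∧ 0 < g) →
          D * a ^ 2 = μ * d * b * (1 + ε) / (d * b * (1 + ε) + ν * (1 - ε)) →
          a ^ 2 + b ^ 2 = ζ / d →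
          g = μ / (d * b * (1 + ε) + ν * (1 - ε)) →
          |a - A| < η ∧ |b - P| < η ∧ |g - G| < η := by
  have hq2 : (0:ℝ) < 2 * m / d := by positivity
  obtain ⟨B, hB0, hB2⟩ : ∃ B : ℝ, 0 < B ∧ B ^ 2 = 2 * m / d :=
    ⟨Real.sqrt (2 * m / d), Real.sqrt_pos.mpr hq2, Real.sq_sqrt hq2.le⟩
  have hes2' : (A ^ 2 + P ^ 2) * d = m := (eq_div_iff hd.ne').mp es2
  have hPB : P < B := by
    have h1 : P ^ 2 < B ^ 2 := by
      rw [hB2]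
      have hA2 : 0 < A ^ 2 := by positivity
      have h2 : P ^ 2 * d < 2 * m := by nlinarith
      exact (lt_div_iff₀ hd).mpr h2
    exact lt_of_pow_lt_pow_left₀ 2 hB0.le h1
  have hAB : A < B := by
    have h1 : A ^ 2 < B ^ 2 := by
      rw [hB2]
      have hP2 : 0 < P ^ 2 := by positivity
      have h2 : A ^ 2 * d < 2 * m := by nlinarith
      exact (lt_div_iff₀ hd).mpr h2
    exact lt_of_pow_lt_pow_left₀ 2 hB0.le h1
  obtain ⟨M, hM0, hMdef⟩ : ∃ M : ℝ, 0 < M ∧ M = 2 * d * B + ν :=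
    ⟨2 * d * B + ν, by positivity, rfl⟩
  obtain ⟨C1, hC10, hC1K⟩ :
      ∃ C : ℝ, 0 < C ∧ C * (μ * d ^ 2 * ν) = D * M ^ 2 + 2 * μ * d ^ 2 * ν * B :=
    ⟨(D * M ^ 2 + 2 * μ * d ^ 2 * ν * B) / (μ * d ^ 2 * ν), by positivity,
      by field_simp⟩
  obtain ⟨C2, hC20, hC2K⟩ :
      ∃ C : ℝ, 0 < C ∧ C * (d * A) = 1 + 2 * d * B * C1 :=
    ⟨(1 + 2 * d * B * C1) / (d * A), by positivity, by field_simp⟩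
  obtain ⟨C3, hC30, hC3K⟩ :
      ∃ C : ℝ, 0 < C ∧ C * (ν ^ 2 / 2) = μ * (d * C1 + d * B + ν) :=
    ⟨2 * μ * (d * C1 + d * B + ν) / ν ^ 2, by positivity, by field_simp⟩
  have hS0 : 0 < C1 + C2 + C3 + 1 := by positivity
  obtain ⟨δ, hδ0, hδm, hδhalf, hδS⟩ :
      ∃ δ : ℝ, 0 < δ ∧ δ ≤ m ∧ δ ≤ 1/2 ∧ δ * (C1 + C2 + C3 + 1) ≤ η := by
    refine ⟨min (min m (1/2)) (η / (C1 + C2 + C3 + 1)), by positivity,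
      le_trans (min_le_left _ _) (min_le_left _ _),
      le_trans (min_le_left _ _) (min_le_right _ _), ?_⟩
    calc min (min m (1/2)) (η / (C1 + C2 + C3 + 1)) * (C1 + C2 + C3 + 1)
        ≤ (η / (C1 + C2 + C3 + 1)) * (C1 + C2 + C3 + 1) :=
          mul_le_mul_of_nonneg_right (min_le_right _ _) hS0.le
      _ = η := div_mul_cancel₀ η (ne_of_gt hS0)
  refine ⟨δ, hδ0, ?_⟩
  intro ζ ε hζ hζm hε0 hεδ hε1 a b g ⟨ha, hb, hg⟩ e1 e2 e3
  have hεhalf : ε < 1/2 := lt_of_lt_of_le hεδ hδhalf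
  have hα : (0:ℝ) < 1 + ε := by linarith
  have hβ : (0:ℝ) < 1 - ε := by linarith
  obtain ⟨hzm2, hzm1⟩ := abs_lt.mp hζm
  have hDel : 0 < d * b * (1 + ε) + ν * (1 - ε) := by positivity
  have hDel' : 0 < d * P + ν := by positivity
  -- polynomial forms of the equations
  have hk : D * a ^ 2 * (d * b * (1 + ε) + ν * (1 - ε)) = μ * d * b * (1 + ε) := by
    rw [e1]; field_simp
  have hks : D * A ^ 2 * (d * P + ν) = μ * d * P := by
    rw [es1]; field_simp
  have he2 : d * (a ^ 2 + b ^ 2) = ζ := by rw [e2]; field_simp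
  have hes2'' : d * (A ^ 2 + P ^ 2) = m := by linarith
  have hgΔ : g * (d * b * (1 + ε) + ν * (1 - ε)) = μ := by
    rw [e3]; field_simp
  have hGΔ : G * (d * P + ν) = μ := by
    rw [es3]; field_simp
  -- bounds on a, b
  have hζ2m : ζ < 2 * m := by linarith
  have hbB : b < B := by
    have h1 : b ^ 2 < B ^ 2 := by
      rw [hB2]
      have ha2 : 0 < a ^ 2 := by positivity
      have h2 : b ^ 2 * d < 2 * m := by
        linarith only [he2, hζ2m, mul_pos (pow_pos ha 2) hd]
      exact (lt_div_iff₀ hd).mpr h2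
    exact lt_of_pow_lt_pow_left₀ 2 hB0.le h1
  have hbP2B : b + P ≤ 2 * B := by linarith
  have hbP0 : (0:ℝ) ≤ b + P := by linarith
  -- bounds on denominators
  have hDelM : d * b * (1 + ε) + ν * (1 - ε) ≤ M := by
    rw [hMdef]
    have h1 : d * b < d * B := mul_lt_mul_of_pos_left hbB hd
    linarith [mul_le_mul_of_nonneg_left hε1.le (mul_pos hd hb).le,
      (mul_pos hν hε0).le]
  have hDel'M : d * P + ν ≤ M := by
    rw [hMdef]
    linarith [mul_lt_mul_of_pos_left hPB hd, (mul_pos hd hB0).le]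
  have hPnn : 0 ≤ (d * b * (1 + ε) + ν * (1 - ε)) * (d * P + ν) :=
    (mul_pos hDel hDel').le
  have hPM : (d * b * (1 + ε) + ν * (1 - ε)) * (d * P + ν) ≤ M ^ 2 := by
    have h := mul_le_mul hDelM hDel'M hDel'.le hM0.le
    linarith only [h]
  -- key identity for b - P
  have keyb : (b - P) * (D * d * (b + P) * ((d * b * (1 + ε) + ν * (1 - ε)) * (d * P + ν))
      + μ * d ^ 2 * ν)
      = D * (ζ - m) * ((d * b * (1 + ε) + ν * (1 - ε)) * (d * P + ν))
        - μ * d ^ 2 * ν * ε * (b + P) := by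
    linear_combination (D * ((d * b * (1 + ε) + ν * (1 - ε)) * (d * P + ν))) * he2
      - (D * ((d * b * (1 + ε) + ν * (1 - ε)) * (d * P + ν))) * hes2''
      - (d * (d * P + ν)) * hk + (d * (d * b * (1 + ε) + ν * (1 - ε))) * hks
  have hq0 : (0:ℝ) < μ * d ^ 2 * ν := by positivity
  have hEb : μ * d ^ 2 * ν ≤ D * d * (b + P) * ((d * b * (1 + ε) + ν * (1 - ε)) * (d * P + ν))
      + μ * d ^ 2 * ν := by
    have hT := mul_pos (mul_pos (mul_pos hD hd) (show (0:ℝ) < b + P by linarith))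
      (mul_pos hDel hDel')
    linarith
  -- bounds on the RHS of keyb
  have hup1 : D * (ζ - m) * ((d * b * (1 + ε) + ν * (1 - ε)) * (d * P + ν)) ≤ D * δ * M ^ 2 := by
    have s1 : D * (ζ - m) * ((d * b * (1 + ε) + ν * (1 - ε)) * (d * P + ν))
        ≤ D * δ * ((d * b * (1 + ε) + ν * (1 - ε)) * (d * P + ν)) :=
      mul_le_mul_of_nonneg_right (mul_le_mul_of_nonneg_left hzm1.le hD.le) hPnn
    have s2 : D * δ * ((d * b * (1 + ε) + ν * (1 - ε)) * (d * P + ν)) ≤ D * δ * M ^ 2 :=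
      mul_le_mul_of_nonneg_left hPM (by positivity : (0:ℝ) ≤ D * δ)
    exact s1.trans s2
  have hlo1 : -(D * δ * M ^ 2) ≤ D * (ζ - m) * ((d * b * (1 + ε) + ν * (1 - ε)) * (d * P + ν)) := by
    have s1 : D * (-δ) * ((d * b * (1 + ε) + ν * (1 - ε)) * (d * P + ν))
        ≤ D * (ζ - m) * ((d * b * (1 + ε) + ν * (1 - ε)) * (d * P + ν)) :=
      mul_le_mul_of_nonneg_right
        (mul_le_mul_of_nonneg_left (show -δ ≤ ζ - m by linarith) hD.le) hPnn
    have s2 : D * δ * ((d * b * (1 + ε) + ν * (1 - ε)) * (d * P + ν)) ≤ D * δ * M ^ 2 :=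
      mul_le_mul_of_nonneg_left hPM (by positivity : (0:ℝ) ≤ D * δ)
    have s3 : D * (-δ) * ((d * b * (1 + ε) + ν * (1 - ε)) * (d * P + ν))
        = -(D * δ * ((d * b * (1 + ε) + ν * (1 - ε)) * (d * P + ν))) := by ring
    linarith [s1, s2, s3]
  have hterm2nn : 0 ≤ μ * d ^ 2 * ν * ε * (b + P) := by positivity
  have hterm2ub : μ * d ^ 2 * ν * ε * (b + P) ≤ μ * d ^ 2 * ν * (δ * (2 * B)) := by
    have s1 : ε * (b + P) ≤ δ * (2 * B) :=
      mul_le_mul hεδ.le hbP2B hbP0 hδ0.le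
    have := mul_le_mul_of_nonneg_left s1 hq0.le
    linarith
  have hscale1 : (C1 * δ) * (μ * d ^ 2 * ν)
      = δ * (D * M ^ 2 + 2 * μ * d ^ 2 * ν * B) := by
    rw [mul_comm C1 δ, mul_assoc, hC1K]
  have hRub : D * (ζ - m) * ((d * b * (1 + ε) + ν * (1 - ε)) * (d * P + ν))
        - μ * d ^ 2 * ν * ε * (b + P) ≤ (C1 * δ) * (μ * d ^ 2 * ν) := by
    rw [hscale1]
    have h := (by positivity : (0:ℝ) ≤ 2 * μ * d ^ 2 * ν * B * δ)
    linarith only [hup1, hterm2nn, h]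
  have hRlb : -(D * (ζ - m) * ((d * b * (1 + ε) + ν * (1 - ε)) * (d * P + ν))
        - μ * d ^ 2 * ν * ε * (b + P)) ≤ (C1 * δ) * (μ * d ^ 2 * ν) := by
    rw [hscale1]
    linarith only [hlo1, hterm2ub]
  have hbP : |b - P| ≤ C1 * δ := by
    rw [abs_le]
    constructor
    · have := aux_le (-(b - P)) (C1 * δ) _ _ hq0 hEb (by positivity)
        (by rw [neg_mul, keyb]; exact hRlb)
      linarith
    · exact aux_le (b - P) (C1 * δ) _ _ hq0 hEb (by positivity) (keyb ▸ hRub)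
  obtain ⟨hbP1, hbP2⟩ := abs_le.mp hbP
  -- a - A
  have keya : (a - A) * (d * (a + A)) = (ζ - m) - d * ((b - P) * (b + P)) := by
    linear_combination he2 - hes2''
  have hprodb : |(b - P) * (b + P)| ≤ (C1 * δ) * (2 * B) := by
    rw [abs_mul]
    apply mul_le_mul hbP _ (abs_nonneg _) (by positivity)
    rw [abs_of_nonneg hbP0]
    exact hbP2B
  obtain ⟨hpb1, hpb2⟩ := abs_le.mp hprodb
  have hqa : (0:ℝ) < d * A := by positivity
  have hEa : d * A ≤ d * (a + A) := by
    linarith only [(mul_pos hd ha).le]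
  have hscale2 : (C2 * δ) * (d * A) = δ * (1 + 2 * d * B * C1) := by
    rw [mul_comm C2 δ, mul_assoc, hC2K]
  have haA : |a - A| ≤ C2 * δ := by
    rw [abs_le]
    have hca : (0:ℝ) ≤ C2 * δ := by positivity
    have hub : (ζ - m) - d * ((b - P) * (b + P)) ≤ (C2 * δ) * (d * A) := by
      rw [hscale2]
      linarith [mul_le_mul_of_nonneg_left hpb1 hd.le]
    have hlb : -((ζ - m) - d * ((b - P) * (b + P))) ≤ (C2 * δ) * (d * A) := by
      rw [hscale2]
      linarith [mul_le_mul_of_nonneg_left hpb2 hd.le]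
    constructor
    · have := aux_le (-(a - A)) (C2 * δ) _ _ hqa hEa hca
        (by rw [neg_mul, keya]; exact hlb)
      linarith
    · exact aux_le (a - A) (C2 * δ) _ _ hqa hEa hca (keya ▸ hub)
  -- g - G
  have keyg : (g - G) * ((d * b * (1 + ε) + ν * (1 - ε)) * (d * P + ν))
      = μ * ((d * P + ν) - (d * b * (1 + ε) + ν * (1 - ε))) := by
    linear_combination (d * P + ν) * hgΔ - (d * b * (1 + ε) + ν * (1 - ε)) * hGΔ
  have hqg : (0:ℝ) < ν ^ 2 / 2 := by positivity
  have hEg : ν ^ 2 / 2 ≤ (d * b * (1 + ε) + ν * (1 - ε)) * (d * P + ν) := by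
    have h1 : ν * (1/2) ≤ d * b * (1 + ε) + ν * (1 - ε) := by
      have t1 := mul_lt_mul_of_pos_left hεhalf hν
      have t2 := (mul_pos (mul_pos hd hb) hα).le
      linarith only [t1, t2]
    have h2 : ν ≤ d * P + ν := by linarith only [(mul_pos hd hP).le]
    have h := mul_le_mul h1 h2 hν.le (by linarith : (0:ℝ) ≤ d * b * (1 + ε) + ν * (1 - ε))
    linarith only [h]
  have hbε : d * b * ε ≤ d * B * δ := by
    have s1 : d * b ≤ d * B := by linarith only [mul_lt_mul_of_pos_left hbB hd]
    exact mul_le_mul s1 hεδ.le hε0.le (by positivity)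
  have hbεnn : 0 ≤ d * b * ε := by positivity
  have hνε : ν * ε ≤ ν * δ := mul_le_mul_of_nonneg_left hεδ.le hν.le
  have hνεnn : 0 ≤ ν * ε := by positivity
  have hdbP1 : d * (-(C1 * δ)) ≤ d * (b - P) := mul_le_mul_of_nonneg_left hbP1 hd.le
  have hdbP2 : d * (b - P) ≤ d * (C1 * δ) := mul_le_mul_of_nonneg_left hbP2 hd.le
  have hdiffub : (d * P + ν) - (d * b * (1 + ε) + ν * (1 - ε))
      ≤ d * (C1 * δ) + δ * (d * B + ν) := by
    linarith only [hdbP1, hbεnn, hνε, (by positivity : (0:ℝ) ≤ δ * (d * B))]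
  have hdifflb : -(d * (C1 * δ) + δ * (d * B + ν))
      ≤ (d * P + ν) - (d * b * (1 + ε) + ν * (1 - ε)) := by
    linarith only [hdbP2, hbε, hνεnn, (by positivity : (0:ℝ) ≤ δ * ν)]
  have hscale3 : (C3 * δ) * (ν ^ 2 / 2) = δ * (μ * (d * C1 + d * B + ν)) := by
    rw [mul_comm C3 δ, mul_assoc, hC3K]
  have hgG : |g - G| ≤ C3 * δ := by
    rw [abs_le]
    have hcg : (0:ℝ) ≤ C3 * δ := by positivity
    have hub : μ * ((d * P + ν) - (d * b * (1 + ε) + ν * (1 - ε))) ≤ (C3 * δ) * (ν ^ 2 / 2) := by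
      rw [hscale3]
      linarith [mul_le_mul_of_nonneg_left hdiffub hμ.le]
    have hlb : -(μ * ((d * P + ν) - (d * b * (1 + ε) + ν * (1 - ε)))) ≤ (C3 * δ) * (ν ^ 2 / 2) := by
      rw [hscale3]
      linarith [mul_le_mul_of_nonneg_left hdifflb hμ.le]
    constructor
    · have := aux_le (-(g - G)) (C3 * δ) _ _ hqg hEg hcg
        (by rw [neg_mul, keyg]; exact hlb)
      linarith
    · exact aux_le (g - G) (C3 * δ) _ _ hqg hEg hcg (keyg ▸ hub)
  -- conclude
  have hfin : ∀ C : ℝ, 0 < C → C + 1 ≤ C1 + C2 + C3 + 1 → C * δ < η := by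
    intro C hC hCS
    have h := mul_le_mul_of_nonneg_left
      (show (1:ℝ) ≤ C1 + C2 + C3 + 1 - C by linarith) hδ0.le
    linarith only [hδS, h, hδ0]
  exact ⟨lt_of_le_of_lt haA (hfin C2 hC20 (by linarith)),
    lt_of_le_of_lt hbP (hfin C1 hC10 (by linarith)),
    lt_of_le_of_lt hgG (hfin C3 hC30 (by linarith))⟩


/-- For `ζ > 0` and `ε ∈ (0,1)`, the perturbed algebraic
system `Da² = μdb(1+ε)/(db(1+ε)+ν(1−ε))`, `a² + b² = ζ/d`,
`γ = μ/(db(1+ε)+ν(1−ε))` admits exactly one positive solution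
`(a_*^{ζ,ε}, b_*^{ζ,ε}, γ_*^{ζ,ε})`, and as `(ζ, ε) → (m, 0)` this solution
converges to the unique positive solution of the unperturbed system with
`a² + b² = m/d`. -/
theorem perturbed_algebraic_system
    (D d μ ν : ℝ)
    (hD : 0 < D) (hd : 0 < d) (hμ : 0 < μ) (hν : 0 < ν) :
    (∀ ζ > (0:ℝ), ∀ ε ∈ Set.Ioo (0:ℝ) 1,
      ∃! p : ℝ × ℝ × ℝ,
        (0 < p.1 ∧ 0 < p.2.1 ∧ 0 < p.2.2) ∧
        D * p.1 ^ 2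
          = μ * d * p.2.1 * (1 + ε) / (d * p.2.1 * (1 + ε) + ν * (1 - ε)) ∧
        p.1 ^ 2 + p.2.1 ^ 2 = ζ / d ∧
        p.2.2 = μ / (d * p.2.1 * (1 + ε) + ν * (1 - ε))) ∧
    (∀ m > (0:ℝ), ∀ pstar : ℝ × ℝ × ℝ,
      ((0 < pstar.1 ∧ 0 < pstar.2.1 ∧ 0 < pstar.2.2) ∧
        D * pstar.1 ^ 2 = μ * d * pstar.2.1 / (d * pstar.2.1 + ν) ∧
        pstar.1 ^ 2 + pstar.2.1 ^ 2 = m / d ∧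
        pstar.2.2 = μ / (d * pstar.2.1 + ν)) →
      ∀ η > (0:ℝ), ∃ δ > (0:ℝ), ∀ ζ ε : ℝ,
        0 < ζ → |ζ - m| < δ → 0 < ε → ε < δ → ε < 1 →
        ∀ p : ℝ × ℝ × ℝ,
          ((0 < p.1 ∧ 0 < p.2.1 ∧ 0 < p.2.2) ∧
            D * p.1 ^ 2
              = μ * d * p.2.1 * (1 + ε) / (d * p.2.1 * (1 + ε) + ν * (1 - ε)) ∧
            p.1 ^ 2 + p.2.1 ^ 2 = ζ / d ∧
            p.2.2 = μ / (d * p.2.1 * (1 + ε) + ν * (1 - ε))) →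
          dist p pstar < η) := by
  constructor
  · intro ζ hζ ε hε
    exact part1 D d μ ν hD hd hμ hν ζ hζ ε hε.1 hε.2
  · intro m hm pstar hps η hη
    obtain ⟨A, P, G⟩ := pstar
    obtain ⟨⟨hA, hP, hG⟩, es1, es2, es3⟩ := hps
    obtain ⟨δ, hδ0, H⟩ := part2 D d μ ν hD hd hμ hν m hm A P G hA hP hG es1 es2 es3 η hη
    refine ⟨δ, hδ0, ?_⟩
    intro ζ ε hζ hζm hε0 hεδ hε1 p hp
    obtain ⟨a, b, g⟩ := p
    obtain ⟨⟨ha, hb, hg⟩, e1, e2, e3⟩ := hp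
    have t := H ζ ε hζ hζm hε0 hεδ hε1 a b g ⟨ha, hb, hg⟩ e1 e2 e3
    simp only [Prod.dist_eq, Real.dist_eq, max_lt_iff]
    exact ⟨t.1, t.2.1, t.2.2⟩
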